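/- Under the well-posedness assumptions for the mixed problem (with a symmetric, bounded and coercive on K by α₀ > 0, and B surjective), the dual space V' decomposes as the direct sum V' = A(K) ⊕ K⁰, where A(K) = {a(w⁰,·) : w⁰ ∈ K} and K⁰ = {b(·,q) : q ∈ Q} is the polar space of K, and both summands are closed subspaces of V'. -/

import Mathlib

set_option maxHeartbeats 1000000

open InnerProductSpace RealInnerProductSpace ContinuousLinearMap

/-- Decomposition of the dual space: `V' = A(K) ⊕ K⁰`, where
`A(K) = {a(w⁰,·) : w⁰ ∈ K}` and `K⁰ = {b(·,q) : q ∈ Q}` (the polar space of `K`),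
and both summands are closed subspaces of `V'`. -/
theorem stmt9
    {V Q : Type*} [NormedAddCommGroup V] [InnerProductSpace ℝ V] [CompleteSpace V]
    [NormedAddCommGroup Q] [InnerProductSpace ℝ Q] [CompleteSpace Q]
    (a : V →L[ℝ] V →L[ℝ] ℝ) (b : V →L[ℝ] Q →L[ℝ] ℝ)
    (hsym : ∀ v w : V, a v w = a w v)
    (K : Set V) (hK : K = {v : V | ∀ q : Q, b v q = 0})
    (α₀ : ℝ) (hα₀ : 0 < α₀) (hcoerK : ∀ v ∈ K, a v v ≥ α₀ * ‖v‖ ^ 2)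
    (hBsurj : ∀ g : Q →L[ℝ] ℝ, ∃ v : V, b v = g)
    (AK K0 : Set (V →L[ℝ] ℝ))
    (hAK : AK = {h : V →L[ℝ] ℝ | ∃ w ∈ K, h = a w})
    (hK0 : K0 = {h : V →L[ℝ] ℝ | ∃ q : Q, h = b.flip q}) :
    IsClosed AK ∧ IsClosed K0 ∧
    K0 = {h : V →L[ℝ] ℝ | ∀ v ∈ K, h v = 0} ∧
    ∀ f : V →L[ℝ] ℝ, ∃! gh : (V →L[ℝ] ℝ) × (V →L[ℝ] ℝ),
      gh.1 ∈ AK ∧ gh.2 ∈ K0 ∧ f = gh.1 + gh.2 := by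
  -- the kernel submodule
  set Ks : Submodule ℝ V := LinearMap.ker (b : V →ₗ[ℝ] Q →L[ℝ] ℝ) with hKs
  have hmemK : ∀ v : V, v ∈ K ↔ v ∈ Ks := by
    intro v
    simp only [hK, Set.mem_setOf_eq, hKs, LinearMap.mem_ker]
    constructor
    · intro h; ext q; simpa using h q
    · intro h q; rw [show b v = 0 from h]; rfl
  haveI : CompleteSpace Ks := (ContinuousLinearMap.isClosed_ker b).completeSpace_coe
  -- open mapping constant for b
  obtain ⟨C, hCpos, hC⟩ := ContinuousLinearMap.exists_preimage_norm_le b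
    (fun g => hBsurj g)
  -- lower bound for b.flip
  have hflip : ∀ q : Q, ‖q‖ ≤ C * ‖b.flip q‖ := by
    intro q
    obtain ⟨v, hv, hnv⟩ := hC (toDual ℝ Q q)
    have h1 : ‖q‖ * ‖q‖ = b v q := by
      rw [hv]; rw [toDual_apply_apply, real_inner_self_eq_norm_mul_norm]
    have h2 : b v q ≤ ‖b.flip q‖ * ‖v‖ := by
      have := (b.flip q).le_opNorm v
      calc b v q = b.flip q v := rfl
        _ ≤ |b.flip q v| := le_abs_self _
        _ ≤ ‖b.flip q‖ * ‖v‖ := by simpa [Real.norm_eq_abs] using this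
    have hnQ : ‖(toDual ℝ Q) q‖ = ‖q‖ := (toDual ℝ Q).norm_map q
    rcases eq_or_lt_of_le (norm_nonneg q) with h0 | h0
    · rw [← h0]; positivity
    · have : ‖q‖ * ‖q‖ ≤ ‖b.flip q‖ * (C * ‖q‖) := by
        calc ‖q‖ * ‖q‖ = b v q := h1
          _ ≤ ‖b.flip q‖ * ‖v‖ := h2
          _ ≤ ‖b.flip q‖ * (C * ‖q‖) := by
              apply mul_le_mul_of_nonneg_left _ (norm_nonneg _)
              rw [hnQ] at hnv; exact hnv
      nlinarith [norm_nonneg (b.flip q)]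
  -- closedness of K0
  have hK0range : K0 = Set.range b.flip := by
    rw [hK0]; ext h
    simp only [Set.mem_setOf_eq, Set.mem_range]
    exact ⟨fun ⟨q, hq⟩ => ⟨q, hq.symm⟩, fun ⟨q, hq⟩ => ⟨q, hq.symm⟩⟩
  have hK0closed : IsClosed K0 := by
    have hal : AntilipschitzWith ⟨C, hCpos.le⟩ b.flip :=
      b.flip.antilipschitz_of_bound (fun q => hflip q)
    rw [hK0range]
    exact hal.isClosed_range b.flip.uniformContinuous
  -- inclusion and restricted operators
  set ι : Ks →L[ℝ] V := Ks.subtypeL with hι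
  set aι : Ks →L[ℝ] V →L[ℝ] ℝ := a ∘L ι with haι
  -- closedness of AK
  have hbd : ∀ w : Ks, α₀ * ‖w‖ ≤ ‖aι w‖ := by
    intro w
    have hw : ‖(w : V)‖ = ‖w‖ := (Submodule.coe_norm w).symm
    rcases eq_or_lt_of_le (norm_nonneg w) with h0 | h0
    · rw [← h0, mul_zero]; positivity
    · have h1 : α₀ * ‖w‖ ^ 2 ≤ a (w : V) (w : V) := hcoerK _ ((hmemK _).2 w.2)
      have h2 : a (w : V) (w : V) ≤ ‖aι w‖ * ‖w‖ := by
        have h3 : ‖aι w ((w : V))‖ ≤ ‖aι w‖ * ‖(w : V)‖ := (aι w).le_opNorm (w : V)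
        have h4 : aι w ((w : V)) = a (w : V) (w : V) := rfl
        rw [h4, Real.norm_eq_abs, hw] at h3
        exact (le_abs_self _).trans h3
      have h5 : α₀ * ‖w‖ * ‖w‖ ≤ ‖aι w‖ * ‖w‖ := by
        calc α₀ * ‖w‖ * ‖w‖ = α₀ * ‖w‖ ^ 2 := by ring
          _ ≤ a (w : V) (w : V) := h1
          _ ≤ ‖aι w‖ * ‖w‖ := h2
      exact le_of_mul_le_mul_right h5 h0
  have hAKrange : AK = Set.range aι := by
    rw [hAK]; ext h
    simp only [Set.mem_setOf_eq, Set.mem_range]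
    constructor
    · rintro ⟨w, hwK, rfl⟩; exact ⟨⟨w, (hmemK w).1 hwK⟩, rfl⟩
    · rintro ⟨w, rfl⟩; exact ⟨(w : V), (hmemK _).2 w.2, rfl⟩
  have hAKclosed : IsClosed AK := by
    have hal : AntilipschitzWith ⟨α₀⁻¹, (inv_pos.mpr hα₀).le⟩ aι := by
      apply aι.antilipschitz_of_bound
      intro w
      have h := hbd w
      calc ‖w‖ = α₀⁻¹ * (α₀ * ‖w‖) := by field_simp
        _ ≤ α₀⁻¹ * ‖aι w‖ := mul_le_mul_of_nonneg_left h (inv_pos.mpr hα₀).le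
    rw [hAKrange]
    exact hal.isClosed_range aι.uniformContinuous
  -- the Riesz representative map of b.flip
  set S : Q →L[ℝ] V :=
    ((toDual ℝ V).symm.toContinuousLinearEquiv : (V →L[ℝ] ℝ) ≃L[ℝ] V).toContinuousLinearMap
      ∘L b.flip with hS
  have hSapp : ∀ (q : Q) (v : V), ⟪S q, v⟫_ℝ = b v q := by
    intro q v
    have : S q = (toDual ℝ V).symm (b.flip q) := rfl
    rw [this, toDual_symm_apply]; rfl
  have hSnorm : ∀ q : Q, ‖S q‖ = ‖b.flip q‖ := by
    intro q
    have : S q = (toDual ℝ V).symm (b.flip q) := rfl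
    rw [this]; exact (toDual ℝ V).symm.norm_map _
  have hSclosed : IsClosed (Set.range S) := by
    have hal : AntilipschitzWith ⟨C, hCpos.le⟩ S :=
      S.antilipschitz_of_bound (fun q => by rw [hSnorm q]; exact hflip q)
    exact hal.isClosed_range S.uniformContinuous
  set R : Submodule ℝ V := LinearMap.range (S : Q →ₗ[ℝ] V) with hR
  haveI : CompleteSpace R := by
    have : IsClosed (R : Set V) := by
      rw [hR, LinearMap.coe_range]; exact hSclosed
    exact this.completeSpace_coe
  have hKsR : Ks = Rᗮ := by
    ext v
    rw [Submodule.mem_orthogonal]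
    constructor
    · intro hv u hu
      obtain ⟨q, rfl⟩ := hu
      rw [show (S : Q →ₗ[ℝ] V) q = S q from rfl, hSapp]
      have : b v = 0 := hv
      rw [this]; rfl
    · intro hv
      show b v = 0
      ext q
      have := hv (S q) ⟨q, rfl⟩
      rw [hSapp] at this
      simpa using this
  have horth : (Ksᗮ : Submodule ℝ V) = R := by
    rw [hKsR, Submodule.orthogonal_orthogonal]
  -- the polar characterization
  have hpolar : K0 = {h : V →L[ℝ] ℝ | ∀ v ∈ K, h v = 0} := by
    ext h
    constructor
    · intro hh
      rw [hK0] at hh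
      obtain ⟨q, rfl⟩ := hh
      intro v hv
      rw [hK] at hv
      exact hv q
    · intro hh
      rw [hK0]
      set u : V := (toDual ℝ V).symm h with hu
      have huapp : ∀ v : V, ⟪u, v⟫_ℝ = h v := fun v => toDual_symm_apply
      have humem : u ∈ Ksᗮ := by
        rw [Submodule.mem_orthogonal]
        intro w hw
        rw [real_inner_comm, huapp]
        exact hh w ((hmemK w).2 hw)
      rw [horth] at humem
      obtain ⟨q, hq⟩ := humem
      refine ⟨q, ?_⟩
      ext v
      rw [show (b.flip q) v = b v q from rfl, ← hSapp q v, show S q = u from hq, huapp]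
  -- Lax-Milgram on Ks
  set aK : Ks →L[ℝ] Ks →L[ℝ] ℝ := ((a ∘L ι).flip ∘L ι).flip with haK
  have haKapp : ∀ w v : Ks, aK w v = a (w : V) (v : V) := fun _ _ => rfl
  have coer : IsCoercive aK := by
    refine ⟨α₀, hα₀, fun u => ?_⟩
    rw [haKapp]
    have h1 := hcoerK (u : V) ((hmemK _).2 u.2)
    rw [Submodule.coe_norm] at *
    calc α₀ * ‖(u : V)‖ * ‖(u : V)‖ = α₀ * ‖(u : V)‖ ^ 2 := by ring
      _ ≤ a (u : V) (u : V) := h1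
  have solve : ∀ f' : Ks →L[ℝ] ℝ, ∃ w : Ks, ∀ v : Ks, aK w v = f' v := by
    intro f'
    set u : Ks := (toDual ℝ Ks).symm f' with hu
    refine ⟨coer.continuousLinearEquivOfBilin.symm u, fun v => ?_⟩
    have h1 := coer.continuousLinearEquivOfBilin_apply
      (coer.continuousLinearEquivOfBilin.symm u) v
    rw [ContinuousLinearEquiv.apply_symm_apply] at h1
    rw [← h1, hu, toDual_symm_apply]
  refine ⟨hAKclosed, hK0closed, hpolar, ?_⟩
  intro f
  obtain ⟨w, hw⟩ := solve (f ∘L ι)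
  set g : V →L[ℝ] ℝ := a (w : V) with hg
  have hgAK : g ∈ AK := by rw [hAK]; exact ⟨(w : V), (hmemK _).2 w.2, rfl⟩
  have hres : ∀ v ∈ K, (f - g) v = 0 := by
    intro v hv
    have hv' : v ∈ Ks := (hmemK v).1 hv
    have h4 : a (w : V) v = f v := hw ⟨v, hv'⟩
    show f v - a (w : V) v = 0
    rw [h4, sub_self]
  have hhK0 : f - g ∈ K0 := by rw [hpolar]; exact hres
  refine ⟨(g, f - g), ⟨hgAK, hhK0, by rw [add_comm, sub_add_cancel]⟩, ?_⟩
  rintro ⟨g', h'⟩ ⟨hg', hh', heq⟩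
  rw [hAK] at hg'
  obtain ⟨w', hw'K, rfl⟩ := hg'
  have hh'0 : ∀ v ∈ K, h' v = 0 := by rw [hpolar] at hh'; exact hh'
  -- g' and g agree on K
  have hagree : ∀ v ∈ K, a w' v = a (w : V) v := by
    intro v hv
    have h1 : a w' v + h' v = f v := by rw [heq]; rfl
    have h4 := hh'0 v hv
    have h5 : a w' v = f v := by rw [← h1, h4, add_zero]
    have h3 : f v - a (w : V) v = 0 := hres v hv
    rw [h5]
    linarith
  have hd : w' - (w : V) ∈ K := by
    rw [hK]; intro q
    have h1 : b w' q = 0 := by rw [hK] at hw'K; exact hw'K q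
    have h2 : b (w : V) q = 0 := by
      have : (w : V) ∈ K := (hmemK _).2 w.2
      rw [hK] at this; exact this q
    simp [h1, h2]
  have hzero : a (w' - (w : V)) (w' - (w : V)) = 0 := by
    have := hagree (w' - (w : V)) hd
    simp only [map_sub, ContinuousLinearMap.sub_apply] at this ⊢
    linarith
  have hww : w' = (w : V) := by
    have hc := hcoerK _ hd
    rw [hzero] at hc
    have hn : (0:ℝ) ≤ ‖w' - (w : V)‖ := norm_nonneg _
    have h0 : ‖w' - (w : V)‖ = 0 := by
      by_contra hne
      have hpos : 0 < ‖w' - (w : V)‖ := lt_of_le_of_ne hn (Ne.symm hne)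
      have hp2 : 0 < α₀ * ‖w' - (w : V)‖ ^ 2 := by positivity
      linarith
    have := norm_eq_zero.mp h0
    exact sub_eq_zero.mp this
  have hg'g : a w' = g := by rw [hww, hg]
  have hh'' : h' = f - g := by
    rw [heq, hg'g]; abel
  rw [Prod.ext_iff]
  exact ⟨hg'g, hh''⟩
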